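/- arXiv:1407.2583 — 4 statements merged into one kernel-verified Lean document; each statement's English description precedes it below -/
import Mathlib

section
/- Let p be a prime integer, M̄ a finitely generated module over R̄ = (ℤ/pℤ)[x₁,…,xₙ], and β : M̄ → F^*(M̄) an R̄-linear map. Then ker β₁ ⊆ ker β₂ ⊆ ⋯ is an ascending chain of submodules of M̄ which eventually stabilizes; moreover, if r ≥ 1 satisfies ker β_r = ker β_{r+1}, then ker β_j = ker β_r for every j ≥ r. -/
/- `R̄ = (ℤ/pℤ)[x₁,…,xₙ]`. -/
open CategoryTheory CategoryTheory.Limits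

noncomputable section

abbrev Rbar (p n : ℕ) : Type := MvPolynomial (Fin n) (ZMod p)

/-- The pull-back functor `F^*` : base change along the Frobenius `r ↦ r^p`. -/
noncomputable def Fstar (A : Type) [CommRing A] (p : ℕ) [Fact p.Prime] [CharP A p] :
    ModuleCat A ⥤ ModuleCat A :=
  ModuleCat.extendScalars (frobenius A p)

/-- The `j`-fold pull-back functor `F^{*j}`; note `F^{*(j+1)}(N) = F^{*j}(F^*(N))`. -/
noncomputable def FstarIter (A : Type) [CommRing A] (p : ℕ) [Fact p.Prime] [CharP A p] :
    ℕ → ModuleCat A ⥤ ModuleCat A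
  | 0 => 𝟭 _
  | j + 1 => Fstar A p ⋙ FstarIter A p j

/-- `β_j : M̄ → F^{*j}(M̄)`, defined by `β₀ = id`, `β_{j+1} = F^{*j}(β) ∘ β_j`
(so `β₁ = β`). -/
noncomputable def betaIter {A : Type} [CommRing A] {p : ℕ} [Fact p.Prime] [CharP A p]
    {M : ModuleCat A} (β : M ⟶ (Fstar A p).obj M) :
    (j : ℕ) → (M ⟶ (FstarIter A p j).obj M)
  | 0 => 𝟙 M
  | j + 1 => betaIter β j ≫ (FstarIter A p j).map β


section MvAux
open MvPolynomial
section FrobFree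
variable (p n : ℕ) [Fact p.Prime]

local notation "R" => Rbar p n

def FrobT : Type := Rbar p n

instance : AddCommGroup (FrobT p n) := inferInstanceAs (AddCommGroup R)
instance : Module R (FrobT p n) := Module.compHom R (frobenius R p)

lemma frob_mul_monomial (c : R) (d : Fin n →₀ ℕ) :
    frobenius R p c * monomial d 1 =
      ∑ a' ∈ c.support, monomial (p • a' + d) (coeff a' c) := by
  conv_lhs => rw [c.as_sum]
  rw [map_sum, Finset.sum_mul]
  refine Finset.sum_congr rfl fun a' _ => ?_
  rw [frobenius_def, monomial_pow, monomial_mul, mul_one, ZMod.pow_card]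

lemma digit_unique {a' a d d₀ : Fin n →₀ ℕ} (hd : ∀ i, d i < p) (hd₀ : ∀ i, d₀ i < p)
    (h : p • a' + d = p • a + d₀) : d = d₀ ∧ a' = a := by
  have hp : 0 < p := (Fact.out : p.Prime).pos
  have key : ∀ i, p * a' i + d i = p * a i + d₀ i := by
    intro i
    have := DFunLike.congr_fun h i
    simpa [Finsupp.add_apply, Finsupp.smul_apply, smul_eq_mul] using this
  have hdd : d = d₀ := by
    ext i
    have h1 : d i = (p * a' i + d i) % p := by
      rw [Nat.mul_add_mod, Nat.mod_eq_of_lt (hd i)]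
    have h2 : d₀ i = (p * a i + d₀ i) % p := by
      rw [Nat.mul_add_mod, Nat.mod_eq_of_lt (hd₀ i)]
    rw [h1, h2, key i]
  refine ⟨hdd, ?_⟩
  ext i
  have h3 := key i
  rw [hdd] at h3
  exact Nat.eq_of_mul_eq_mul_left hp (Nat.add_right_cancel h3)

lemma coeff_frob_mul_monomial (c : R) {d d₀ : Fin n →₀ ℕ} (a : Fin n →₀ ℕ)
    (hd : ∀ i, d i < p) (hd₀ : ∀ i, d₀ i < p) :
    coeff (p • a + d₀) (frobenius R p c * monomial d 1) =
      if d = d₀ then coeff a c else 0 := by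
  classical
  rw [frob_mul_monomial, coeff_sum]
  by_cases hdd : d = d₀
  · subst hdd
    rw [if_pos rfl]
    have h : ∀ a' ∈ c.support,
        coeff (p • a + d) (monomial (p • a' + d) (coeff a' c)) =
          if a' = a then coeff a' c else 0 := by
      intro a' _
      rw [coeff_monomial]
      exact if_congr ⟨fun h => (digit_unique p n hd hd h).2, fun h => by rw [h]⟩ rfl rfl
    rw [Finset.sum_congr rfl h, Finset.sum_ite_eq' c.support a (fun a' => coeff a' c)]
    by_cases ha : a ∈ c.support
    · rw [if_pos ha]
    · rw [if_neg ha, (notMem_support_iff).1 ha]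
  · rw [if_neg hdd]
    refine Finset.sum_eq_zero fun a' _ => ?_
    rw [coeff_monomial, if_neg]
    intro h
    exact hdd (digit_unique p n hd hd₀ h).1

def frobIdx : Type := {d : Fin n →₀ ℕ // ∀ i : Fin n, d i < p}

def vB : frobIdx p n → FrobT p n := fun d => (monomial d.1 1 : R)

lemma vB_smul (c : R) (d : frobIdx p n) :
    (c • vB p n d : FrobT p n) = ((frobenius R p c * monomial d.1 1 : R) : FrobT p n) := rfl

lemma vB_indep : LinearIndependent R (vB p n) := by
  classical
  rw [linearIndependent_iff]
  intro l hl
  refine Finsupp.ext fun d₀ => MvPolynomial.ext _ _ fun a => ?_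
  rw [Finsupp.coe_zero, Pi.zero_apply, coeff_zero]
  rw [Finsupp.linearCombination_apply, Finsupp.sum] at hl
  have hc : (coeff (p • a + d₀.1)
      ((∑ d ∈ l.support, (l d • vB p n d : FrobT p n) : FrobT p n) : R)) = 0 := by
    rw [hl]; rfl
  erw [show ((∑ d ∈ l.support, (l d • vB p n d : FrobT p n) : FrobT p n) : R)
      = ∑ d ∈ l.support, ((l d • vB p n d : FrobT p n) : R) from rfl, coeff_sum] at hc
  have h2 : ∀ d ∈ l.support,
      coeff (p • a + d₀.1) ((l d • vB p n d : FrobT p n) : R) =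
        if d = d₀ then coeff a (l d) else 0 := by
    intro d _
    rw [vB_smul, coeff_frob_mul_monomial p n (l d) a d.2 d₀.2]
    exact if_congr ⟨fun h => Subtype.ext h, fun h => congrArg Subtype.val h⟩ rfl rfl
  rw [Finset.sum_congr rfl h2, Finset.sum_ite_eq' l.support d₀ (fun d => coeff a (l d))] at hc
  by_cases hmem : d₀ ∈ l.support
  · rw [if_pos hmem] at hc; exact hc
  · rw [Finsupp.notMem_support_iff.1 hmem, coeff_zero]

lemma vB_span : ⊤ ≤ Submodule.span R (Set.range (vB p n)) := by
  intro x _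
  have hp : 0 < p := (Fact.out : p.Prime).pos
  have hx : (x : R) = ∑ a ∈ (x : R).support, monomial a (coeff a (x : R)) := as_sum _
  rw [show (x : FrobT p n) = ((∑ a ∈ (x : R).support, monomial a (coeff a (x : R)) : R) : FrobT p n)
      from hx]
  refine Submodule.sum_mem _ fun a _ => ?_
  set c := coeff a (x : R) with hc
  set q : Fin n →₀ ℕ := a.mapRange (· / p) (Nat.zero_div p) with hq
  have hdlt : ∀ i : Fin n, (a.mapRange (· % p) (Nat.zero_mod p)) i < p := fun i => by
    rw [Finsupp.mapRange_apply]; exact Nat.mod_lt _ hp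
  set d : frobIdx p n := ⟨a.mapRange (· % p) (Nat.zero_mod p), hdlt⟩ with hd
  have hae : p • q + d.1 = a := by
    ext i
    simp only [Finsupp.add_apply, Finsupp.smul_apply, smul_eq_mul, Finsupp.mapRange_apply, hq, hd]
    exact Nat.div_add_mod (a i) p
  have key : ((monomial a c : R) : FrobT p n) = (monomial q c : R) • vB p n d := by
    rw [vB_smul, frobenius_def, monomial_pow, monomial_mul, mul_one, ZMod.pow_card, hae]
  rw [key]
  exact Submodule.smul_mem _ _ (Submodule.subset_span ⟨d, rfl⟩)

instance : Module.Free R (FrobT p n) :=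
  Module.Free.of_basis (Module.Basis.mk (vB_indep p n) (vB_span p n))

instance : Module.Flat R (FrobT p n) := Module.Flat.of_free

end FrobFree

end MvAux

section Kernels
variable (p n : ℕ) [Fact p.Prime]
local notation "R" => Rbar p n

lemma fstar_map_eq {N N' : ModuleCat R} (lam : N ⟶ N') (x : TensorProduct R (FrobT p n) N) :
    ((Fstar R p).map lam).hom x = LinearMap.lTensor (FrobT p n) lam.hom x := by
  induction x using TensorProduct.induction_on with
  | zero => exact (map_zero _).trans (map_zero _).symm
  | tmul s m => rfl
  | add x y hx hy => exact (map_add _ _ _).trans ((congrArg₂ (· + ·) hx hy).trans (map_add _ _ _).symm)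

lemma ker_fstar_map_eq {N N' N'' : ModuleCat R} (lam : N ⟶ N') (mu : N ⟶ N'')
    (h : LinearMap.ker lam.hom = LinearMap.ker mu.hom) :
    LinearMap.ker ((Fstar R p).map lam).hom = LinearMap.ker ((Fstar R p).map mu).hom := by
  ext x
  simp only [LinearMap.mem_ker]
  rw [fstar_map_eq p n lam x, fstar_map_eq p n mu x]
  have hl := Module.Flat.lTensor_exact (FrobT p n)
    (LinearMap.exact_subtype_ker_map lam.hom)
  have hm := Module.Flat.lTensor_exact (FrobT p n)
    (LinearMap.exact_subtype_ker_map mu.hom)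
  show x ∈ LinearMap.ker (LinearMap.lTensor (FrobT p n) lam.hom) ↔
    x ∈ LinearMap.ker (LinearMap.lTensor (FrobT p n) mu.hom)
  rw [LinearMap.exact_iff.mp hl, LinearMap.exact_iff.mp hm, h]
end Kernels

section Cat
variable (A : Type) [CommRing A] (p : ℕ) [Fact p.Prime] [CharP A p]

/-- commuting `F^*` past `F^{*s}`. -/
noncomputable def eIso : (s : ℕ) → (FstarIter A p s ⋙ Fstar A p ≅ Fstar A p ⋙ FstarIter A p s)
  | 0 => Iso.refl _
  | s + 1 => Functor.isoWhiskerLeft (Fstar A p) (eIso s)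

variable {A p}

lemma betaIter_fstar_eq {M : ModuleCat A} (β : M ⟶ (Fstar A p).obj M) :
    ∀ s : ℕ, betaIter ((Fstar A p).map β) s =
      (Fstar A p).map (betaIter β s) ≫ (eIso A p s).hom.app M
  | 0 => by
    show 𝟙 _ = (Fstar A p).map (𝟙 M) ≫ 𝟙 _
    rw [CategoryTheory.Functor.map_id, Category.comp_id]
  | s + 1 => by
    show betaIter ((Fstar A p).map β) s ≫ (FstarIter A p s).map ((Fstar A p).map β)
        = (Fstar A p).map (betaIter β s ≫ (FstarIter A p s).map β) ≫
          (eIso A p s).hom.app ((Fstar A p).obj M)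
    have nat : (Fstar A p).map ((FstarIter A p s).map β) ≫
          (eIso A p s).hom.app ((Fstar A p).obj M)
        = (eIso A p s).hom.app M ≫ (FstarIter A p s).map ((Fstar A p).map β) :=
      (eIso A p s).hom.naturality β
    rw [betaIter_fstar_eq β s, Functor.map_comp, Category.assoc, Category.assoc, nat]

lemma betaIter_succ_eq {M : ModuleCat A} (β : M ⟶ (Fstar A p).obj M) :
    ∀ s : ℕ, betaIter β (s + 1) = β ≫ betaIter ((Fstar A p).map β) s
  | 0 => by
    show (𝟙 M ≫ β) = β ≫ 𝟙 _
    rw [Category.id_comp, Category.comp_id]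
  | s + 1 => by
    show betaIter β (s + 1) ≫ (FstarIter A p s).map ((Fstar A p).map β)
        = β ≫ (betaIter ((Fstar A p).map β) s ≫
            (FstarIter A p s).map ((Fstar A p).map β))
    rw [betaIter_succ_eq β s]
    exact Category.assoc _ _ _
end Cat
section Final
variable (p n : ℕ) [Fact p.Prime]
local notation "R" => Rbar p n

lemma ker_comp_iso' {N N' N'' : ModuleCat R} (f : N ⟶ N') (g : N' ⟶ N'') [IsIso g] :
    LinearMap.ker (f ≫ g).hom = LinearMap.ker f.hom := by
  have hinj : Function.Injective g := by
    rw [← ModuleCat.mono_iff_injective]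
    infer_instance
  rw [ModuleCat.hom_comp, LinearMap.ker_comp, LinearMap.ker_eq_bot.mpr hinj, Submodule.comap_bot]

lemma ker_fstarIter_map_eq :
    ∀ (s : ℕ) {N N' N'' : ModuleCat R} (lam : N ⟶ N') (mu : N ⟶ N''),
      LinearMap.ker lam.hom = LinearMap.ker mu.hom →
      LinearMap.ker ((FstarIter R p s).map lam).hom = LinearMap.ker ((FstarIter R p s).map mu).hom
  | 0, _, _, _, lam, mu, h => h
  | s + 1, _, _, _, lam, mu, h =>
      ker_fstarIter_map_eq s ((Fstar R p).map lam) ((Fstar R p).map mu)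
        (ker_fstar_map_eq p n lam mu h)

lemma step_ker {M : ModuleCat R} (β : M ⟶ (Fstar R p).obj M) (s : ℕ)
    (h : LinearMap.ker (betaIter β s).hom = LinearMap.ker (betaIter β (s + 1)).hom) :
    LinearMap.ker (betaIter β (s + 1)).hom = LinearMap.ker (betaIter β (s + 1 + 1)).hom := by
  have hγ : LinearMap.ker (betaIter ((Fstar R p).map β) s).hom
      = LinearMap.ker (betaIter ((Fstar R p).map β) (s + 1)).hom := by
    rw [betaIter_fstar_eq β s, betaIter_fstar_eq β (s + 1),
      ker_comp_iso' p n _ ((eIso R p s).hom.app M),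
      ker_comp_iso' p n _ ((eIso R p (s + 1)).hom.app M)]
    exact ker_fstar_map_eq p n _ _ h
  erw [betaIter_succ_eq β s, betaIter_succ_eq β (s + 1), ModuleCat.hom_comp, ModuleCat.hom_comp,
    LinearMap.ker_comp, LinearMap.ker_comp, hγ]
  rfl
end Final

/-- For a prime `p`, a finitely generated module `M̄` over
`R̄ = (ℤ/pℤ)[x₁,…,xₙ]` and an `R̄`-linear map `β : M̄ → F^*(M̄)`, the kernels
`ker β₁ ⊆ ker β₂ ⊆ ⋯` form an ascending chain of submodules of `M̄` which eventually
stabilizes; moreover if `r ≥ 1` satisfies `ker β_r = ker β_{r+1}`, then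
`ker β_j = ker β_r` for every `j ≥ r`. -/
theorem stmt_1 (p n : ℕ) [Fact p.Prime] (M : ModuleCat (Rbar p n))
    [Module.Finite (Rbar p n) M] (β : M ⟶ (Fstar (Rbar p n) p).obj M) :
    (∀ j : ℕ, 1 ≤ j → LinearMap.ker (betaIter β j).hom ≤ LinearMap.ker (betaIter β (j + 1)).hom) ∧
    (∃ r : ℕ, 1 ≤ r ∧ ∀ j : ℕ, r ≤ j →
      LinearMap.ker (betaIter β j).hom = LinearMap.ker (betaIter β r).hom) ∧
    (∀ r : ℕ, 1 ≤ r →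
      LinearMap.ker (betaIter β r).hom = LinearMap.ker (betaIter β (r + 1)).hom →
      ∀ j : ℕ, r ≤ j → LinearMap.ker (betaIter β j).hom = LinearMap.ker (betaIter β r).hom) := by
  have part1 : ∀ j : ℕ, LinearMap.ker (betaIter β j).hom ≤ LinearMap.ker (betaIter β (j + 1)).hom := by
    intro j
    show LinearMap.ker (betaIter β j).hom ≤
      LinearMap.ker (betaIter β j ≫ (FstarIter (Rbar p n) p j).map β).hom
    rw [ModuleCat.hom_comp]
    exact LinearMap.ker_le_ker_comp _ _
  have part3 : ∀ r : ℕ,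
      LinearMap.ker (betaIter β r).hom = LinearMap.ker (betaIter β (r + 1)).hom →
      ∀ j : ℕ, r ≤ j → LinearMap.ker (betaIter β j).hom = LinearMap.ker (betaIter β r).hom := by
    intro r hk j hj
    obtain ⟨k, rfl⟩ := Nat.exists_eq_add_of_le hj
    have aux : ∀ k : ℕ,
        (LinearMap.ker (betaIter β (r + k)).hom = LinearMap.ker (betaIter β r).hom) ∧
        (LinearMap.ker (betaIter β (r + k)).hom = LinearMap.ker (betaIter β (r + k + 1)).hom) := by
      intro k
      induction k with
      | zero => exact ⟨rfl, hk⟩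
      | succ k ih => exact ⟨ih.2.symm.trans ih.1, step_ker p n β (r + k) ih.2⟩
    exact (aux k).1
  refine ⟨fun j _ => part1 j, ?_, fun r _ => part3 r⟩
  have hnoeth : IsNoetherian (Rbar p n) M := isNoetherian_of_isNoetherianRing_of_finite _ _
  obtain ⟨n₀, hn₀⟩ := monotone_stabilizes_iff_noetherian.mpr hnoeth
    ⟨fun j => LinearMap.ker (betaIter β (j + 1)).hom, monotone_nat_of_le_succ fun j => part1 (j + 1)⟩
  refine ⟨n₀ + 1, Nat.succ_le_succ (Nat.zero_le _), ?_⟩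
  exact part3 (n₀ + 1) (hn₀ (n₀ + 1) (Nat.le_succ n₀))
end
end

section
/- Let p be a prime integer, M̄ a finitely generated module over R̄ = (ℤ/pℤ)[x₁,…,xₙ], and β : M̄ → F^*(M̄) an R̄-linear map. If r ≥ 1 satisfies ker β_r = ker β_{r+1}, then the direct limit 𝓜 of the system M̄ → F^*(M̄) → F^{*2}(M̄) → ⋯ is zero if and only if β_r = 0 (equivalently, ker β_r = M̄). -/
/- `R̄ = (ℤ/pℤ)[x₁,…,xₙ]`. -/
open CategoryTheory CategoryTheory.Limits

noncomputable section

/-- The inductive system `M̄ →^β F^*(M̄) →^{F^*(β)} F^{*2}(M̄) → ⋯` as a functor `ℕ ⥤ ModuleCat A`. -/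
noncomputable def genSystem {A : Type} [CommRing A] {p : ℕ} [Fact p.Prime] [CharP A p]
    {M : ModuleCat A} (β : M ⟶ (Fstar A p).obj M) : ℕ ⥤ ModuleCat A :=
  Functor.ofSequence (X := fun j => (FstarIter A p j).obj M)
    (fun j => (FstarIter A p j).map β)

/-- `𝓜`, the direct limit (colimit over `ℕ`) of the system generated by `β`;
the underlying module of the `F`-finite module generated by `β`. -/
noncomputable def genLimit {A : Type} [CommRing A] {p : ℕ} [Fact p.Prime] [CharP A p]
    {M : ModuleCat A} (β : M ⟶ (Fstar A p).obj M) : ModuleCat A :=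
  colimit (genSystem β)

/-! ### Auxiliary: freeness/flatness of `R̄` over itself via Frobenius -/

section Flatness

variable (p n : ℕ) [Fact p.Prime]

local notation "R" => MvPolynomial (Fin n) (ZMod p)

/-- `R` viewed as a module over itself via the Frobenius. -/
def Sfrob : ModuleCat R :=
  (ModuleCat.restrictScalars (frobenius R p)).obj (ModuleCat.of R R)

/-- embed `Fin n → Fin p` into exponent finsupps -/
def aF (a : Fin n → Fin p) : Fin n →₀ ℕ := Finsupp.equivFunOnFinite.symm (fun i => (a i : ℕ))

def encExp (d : Fin n →₀ ℕ) (a : Fin n → Fin p) : Fin n →₀ ℕ := p • d + aF p n a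

def eqvExp : (Fin n →₀ ℕ) ≃ ((Fin n → Fin p) × (Fin n →₀ ℕ)) where
  toFun m := (fun i => ⟨m i % p, Nat.mod_lt _ (Fact.out : p.Prime).pos⟩,
    m.mapRange (· / p) (Nat.zero_div p))
  invFun x := encExp p n x.2 x.1
  left_inv m := by
    ext i
    simp [encExp, aF, Nat.div_add_mod]
  right_inv x := by
    obtain ⟨a, d⟩ := x
    have hp : 0 < p := (Fact.out : p.Prime).pos
    refine Prod.ext (funext fun i => Fin.ext ?_) (Finsupp.ext fun i => ?_)
    · simp [encExp, aF, Nat.mul_add_mod, Nat.mod_eq_of_lt (a i).2]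
    · simp [encExp, aF, Nat.mul_add_div hp, Nat.div_eq_of_lt (a i).2]

lemma eqvExp_symm (d : Fin n →₀ ℕ) (a : Fin n → Fin p) :
    (eqvExp p n).symm (a, d) = encExp p n d a := rfl

def psiF : ((Fin n → Fin p) →₀ R) →ₗ[R] Sfrob p n :=
  Finsupp.linearCombination R
    (fun a => (show (Sfrob p n : Type) from MvPolynomial.monomial (aF p n a) (1 : ZMod p)))

lemma psiF_single (a : Fin n → Fin p) (d : Fin n →₀ ℕ) (c : ZMod p) :
    psiF p n (Finsupp.single a (MvPolynomial.monomial d c)) =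
      (show (Sfrob p n : Type) from MvPolynomial.monomial (encExp p n d a) c) := by
  rw [psiF, Finsupp.linearCombination_single]
  show (show R from frobenius R p (MvPolynomial.monomial d c)
      * (MvPolynomial.monomial (aF p n a) (1 : ZMod p))) = _
  rw [frobenius_def, MvPolynomial.monomial_pow, MvPolynomial.monomial_mul, ZMod.pow_card,
    mul_one, encExp]

def phiF : R ≃+ ((Fin n → Fin p) →₀ R) :=
  AddMonoidAlgebra.coeffAddEquiv.trans ((Finsupp.domCongr (eqvExp p n)).trans
    ((Finsupp.finsuppProdLEquiv (ZMod p)).toAddEquiv.trans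
      (Finsupp.mapRange.addEquiv AddMonoidAlgebra.coeffAddEquiv.symm)))

lemma curry_single' {α β M : Type*} [AddCommMonoid M] (x : α × β) (c : M) :
    Finsupp.curry (Finsupp.single x c) = Finsupp.single x.1 (Finsupp.single x.2 c) := by
  exact Finsupp.curry_single x c

lemma phiF_monomial (d : Fin n →₀ ℕ) (a : Fin n → Fin p) (c : ZMod p) :
    phiF p n (MvPolynomial.monomial (encExp p n d a) c) =
      Finsupp.single a (MvPolynomial.monomial d c) := by
  have h1 : (eqvExp p n) (encExp p n d a) = (a, d) := by
    rw [← eqvExp_symm]; exact (eqvExp p n).apply_symm_apply _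
  rw [phiF, ← MvPolynomial.single_eq_monomial]
  show Finsupp.mapRange
      (⇑(AddMonoidAlgebra.coeffAddEquiv : AddMonoidAlgebra (ZMod p) (Fin n →₀ ℕ) ≃+ _).symm)
    (map_zero _) (Finsupp.curry (Finsupp.equivMapDomain (eqvExp p n)
      (AddMonoidAlgebra.single (encExp p n d a) c).coeff)) = _
  rw [AddMonoidAlgebra.coeff_single, Finsupp.equivMapDomain_single, h1, curry_single',
    Finsupp.mapRange_single, ← MvPolynomial.single_eq_monomial]
  rfl

lemma phiF_psiF_single (a : Fin n → Fin p) (r : R) :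
    phiF p n (psiF p n (Finsupp.single a r)) = Finsupp.single a r := by
  induction r using MvPolynomial.induction_on' with
  | monomial u c => rw [psiF_single, phiF_monomial]
  | add r1 r2 h1 h2 =>
    rw [Finsupp.single_add, map_add]
    exact (map_add (phiF p n) _ _).trans (by rw [h1, h2])

lemma phiF_psiF (g : (Fin n → Fin p) →₀ R) : phiF p n (psiF p n g) = g := by
  induction g using Finsupp.induction with
  | zero => rw [map_zero]; exact map_zero (phiF p n)
  | single_add a r f _ _ ih =>
    rw [map_add]
    exact (map_add (phiF p n) _ _).trans (by rw [ih, phiF_psiF_single])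

lemma psiF_bij : Function.Bijective (psiF p n) := by
  constructor
  · intro g1 g2 h
    rw [← phiF_psiF p n g1, ← phiF_psiF p n g2, h]
  · have H : ∀ f : R, ∃ g, psiF p n g = (show (Sfrob p n : Type) from f) := by
      intro f
      induction f using MvPolynomial.induction_on' with
      | monomial u c =>
        refine ⟨Finsupp.single ((eqvExp p n) u).1 (MvPolynomial.monomial ((eqvExp p n) u).2 c), ?_⟩
        rw [psiF_single]
        have hu : encExp p n ((eqvExp p n) u).2 ((eqvExp p n) u).1 = u := by
          rw [← eqvExp_symm (p := p) (n := n)]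
          simpa using (eqvExp p n).symm_apply_apply u
        rw [hu]
      | add r1 r2 ih1 ih2 =>
        obtain ⟨g1, hg1⟩ := ih1
        obtain ⟨g2, hg2⟩ := ih2
        exact ⟨g1 + g2, by rw [map_add, hg1, hg2]; rfl⟩
    intro f
    exact H (show R from f)

instance : Module.Free R (Sfrob p n) :=
  Module.Free.of_equiv (LinearEquiv.ofBijective (psiF p n) (psiF_bij p n))

instance : Module.Flat R (Sfrob p n) := Module.Flat.of_free

end Flatness

/-! ### Auxiliary category-theoretic lemmas -/

section CatLemmas

variable {A : Type} [CommRing A] {p : ℕ} [Fact p.Prime] [CharP A p]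

lemma Fstar_map_zero {M N : ModuleCat A} : (Fstar A p).map (0 : M ⟶ N) = 0 := by
  apply ModuleCat.hom_ext
  apply LinearMap.ext
  intro x
  rw [ModuleCat.hom_zero, LinearMap.zero_apply]
  induction x using TensorProduct.induction_on with
  | zero => exact map_zero _
  | tmul s m =>
      show (ModuleCat.extendScalars (frobenius A p)).map (0 : M ⟶ N) _ = _
      erw [ModuleCat.ExtendScalars.map_tmul]
      rw [show (0 : M ⟶ N) m = 0 from rfl]
      erw [TensorProduct.tmul_zero]
      rfl
  | add x y hx hy =>
      exact (map_add _ x y).trans (by erw [hx, hy, add_zero])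

lemma FstarIter_map_zero : ∀ (j : ℕ) {M N : ModuleCat A},
    (FstarIter A p j).map (0 : M ⟶ N) = 0
  | 0, M, N => rfl
  | j + 1, M, N => by
      show (FstarIter A p j).map ((Fstar A p).map (0 : M ⟶ N)) = 0
      rw [Fstar_map_zero]
      exact FstarIter_map_zero j

lemma FstarIter_add (j k : ℕ) :
    FstarIter A p (j + k) = FstarIter A p k ⋙ FstarIter A p j := by
  induction k with
  | zero => rfl
  | succ k ih =>
      show Fstar A p ⋙ FstarIter A p (j + k) = _
      rw [ih]
      rfl

lemma Fcomm (s : ℕ) :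
    FstarIter A p s ⋙ Fstar A p = Fstar A p ⋙ FstarIter A p s := by
  induction s with
  | zero => rfl
  | succ s ih =>
      show Fstar A p ⋙ (FstarIter A p s ⋙ Fstar A p) = _
      rw [ih]
      rfl

variable {M : ModuleCat A} (β : M ⟶ (Fstar A p).obj M)

lemma betaIter_succ (s : ℕ) :
    betaIter β (s + 1) =
      β ≫ (Fstar A p).map (betaIter β s) ≫
        eqToHom (Functor.congr_obj (Fcomm (A := A) (p := p) s) M) := by
  induction s with
  | zero =>
      show betaIter β 0 ≫ (FstarIter A p 0).map β =
        β ≫ (Fstar A p).map (𝟙 M) ≫ eqToHom (Functor.congr_obj (Fcomm (A := A) (p := p) 0) M)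
      rw [CategoryTheory.Functor.map_id]
      rfl
  | succ s ih =>
      show betaIter β (s + 1) ≫ (FstarIter A p s).map ((Fstar A p).map β) =
        β ≫ (Fstar A p).map (betaIter β s ≫ (FstarIter A p s).map β) ≫
          eqToHom (Functor.congr_obj (Fcomm (A := A) (p := p) (s + 1)) M)
      rw [ih, CategoryTheory.Functor.map_comp]
      have hc : (Fstar A p).map ((FstarIter A p s).map β) =
          eqToHom (Functor.congr_obj (Fcomm (A := A) (p := p) s) M) ≫
            (FstarIter A p s).map ((Fstar A p).map β) ≫
            eqToHom (Functor.congr_obj (Fcomm (A := A) (p := p) s) ((Fstar A p).obj M)).symm :=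
        Functor.congr_hom (Fcomm (A := A) (p := p) s) β
      rw [hc]
      simp only [Category.assoc, eqToHom_trans]
      erw [eqToHom_trans, eqToHom_refl, Category.comp_id]
      rfl

lemma genSystem_succ (k : ℕ) :
    (genSystem β).map (homOfLE (Nat.le_succ k)) = (FstarIter A p k).map β :=
  Functor.ofSequence_map_homOfLE_succ _ k

lemma genSystem_map_from_zero (k : ℕ) :
    (genSystem β).map (homOfLE (Nat.zero_le k)) = betaIter β k := by
  induction k with
  | zero =>
      rw [show homOfLE (Nat.zero_le 0) = 𝟙 (0 : ℕ) from Subsingleton.elim _ _,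
        CategoryTheory.Functor.map_id]
      rfl
  | succ k ih =>
      rw [show homOfLE (Nat.zero_le (k + 1)) =
          homOfLE (Nat.zero_le k) ≫ homOfLE (Nat.le_succ k) from Subsingleton.elim _ _,
        CategoryTheory.Functor.map_comp, ih, genSystem_succ]
      rfl

lemma genSystem_map_add (j m : ℕ) :
    (genSystem β).map (homOfLE (Nat.le_add_right j m)) =
      (FstarIter A p j).map (betaIter β m) ≫
        eqToHom ((Functor.congr_obj (FstarIter_add (A := A) (p := p) j m) M).symm) := by
  induction m with
  | zero =>
      rw [show homOfLE (Nat.le_add_right j 0) = 𝟙 (j : ℕ) from Subsingleton.elim _ _,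
        CategoryTheory.Functor.map_id,
        show (FstarIter A p j).map (betaIter β 0) = 𝟙 _ from (FstarIter A p j).map_id M]
      exact (Category.id_comp _).symm
  | succ m ih =>
      rw [show homOfLE (Nat.le_add_right j (m + 1)) =
          homOfLE (Nat.le_add_right j m) ≫ homOfLE (Nat.le_succ (j + m)) from
          Subsingleton.elim _ _,
        CategoryTheory.Functor.map_comp, ih, genSystem_succ,
        show betaIter β (m + 1) = betaIter β m ≫ (FstarIter A p m).map β from rfl]
      erw [CategoryTheory.Functor.map_comp]
      have hc : (FstarIter A p (j + m)).map β =
          eqToHom (Functor.congr_obj (FstarIter_add (A := A) (p := p) j m) M) ≫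
            (FstarIter A p j).map ((FstarIter A p m).map β) ≫
            eqToHom (Functor.congr_obj (FstarIter_add (A := A) (p := p) j m)
              ((Fstar A p).obj M)).symm :=
        Functor.congr_hom (FstarIter_add (A := A) (p := p) j m) β
      rw [hc]
      simp only [Category.assoc, eqToHom_trans, eqToHom_trans_assoc]
      erw [Category.assoc, eqToHom_trans_assoc, eqToHom_refl, Category.id_comp]
      rfl

lemma eqToHom_apply_eq_zero {X Y : ModuleCat A} (h : X = Y) (x : X) :
    eqToHom h x = 0 ↔ x = 0 := by
  subst h
  simp

lemma ker_le_succ (s : ℕ) :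
    LinearMap.ker (betaIter β s).hom ≤ LinearMap.ker (betaIter β (s + 1)).hom := by
  intro x hx
  have hx' : betaIter β s x = 0 := hx
  show betaIter β (s + 1) x = 0
  show (FstarIter A p s).map β (betaIter β s x) = 0
  rw [hx', map_zero]

lemma ker_mono {s t : ℕ} (h : s ≤ t) :
    LinearMap.ker (betaIter β s).hom ≤ LinearMap.ker (betaIter β t).hom := by
  induction t, h using Nat.le_induction with
  | base => exact le_rfl
  | succ t ht ih => exact ih.trans (ker_le_succ β t)

end CatLemmas

section Exactness

variable (p n : ℕ) [Fact p.Prime]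

local notation "R" => MvPolynomial (Fin n) (ZMod p)

lemma Fstar_map_eq_lTensor {M N : ModuleCat R} (l : M ⟶ N)
    (x : TensorProduct R (Sfrob p n) M) :
    (Fstar R p).map l x = LinearMap.lTensor (Sfrob p n) l.hom x := by
  induction x using TensorProduct.induction_on with
  | zero => exact (map_zero _).trans (map_zero _).symm
  | tmul s m =>
      show (ModuleCat.extendScalars (frobenius R p)).map l _ = _
      erw [ModuleCat.ExtendScalars.map_tmul]
  | add x y hx hy => exact (map_add _ x y).trans ((congrArg₂ (· + ·) hx hy).trans (map_add _ x y).symm)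

lemma Fstar_exact {M N : ModuleCat R} (l : M ⟶ N) (x : (Fstar R p).obj M)
    (hx : (Fstar R p).map l x = 0) :
    ∃ y : (Fstar R p).obj (ModuleCat.of R (LinearMap.ker l.hom)),
      (Fstar R p).map (ModuleCat.ofHom (LinearMap.ker l.hom).subtype) y = x := by
  have hex : Function.Exact ((LinearMap.ker l.hom).subtype) l.hom :=
    LinearMap.exact_subtype_ker_map l.hom
  have hT := Module.Flat.lTensor_exact ((Sfrob p n : Type)) hex
  have hx' : LinearMap.lTensor (Sfrob p n) l.hom x = 0 := by
    exact (Fstar_map_eq_lTensor p n l x).symm.trans hx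
  obtain ⟨y, hy⟩ := (hT x).mp hx'
  exact ⟨y, (Fstar_map_eq_lTensor p n (ModuleCat.ofHom (LinearMap.ker l.hom).subtype) y).trans hy⟩

lemma ker_stab {M : ModuleCat R} (β : M ⟶ (Fstar R p).obj M) (s : ℕ)
    (h : LinearMap.ker (betaIter β s).hom = LinearMap.ker (betaIter β (s + 1)).hom) :
    LinearMap.ker (betaIter β (s + 1)).hom = LinearMap.ker (betaIter β (s + 2)).hom := by
  refine le_antisymm (ker_le_succ β (s + 1)) ?_
  intro x hx
  have hx0 : betaIter β (s + 2) x = 0 := hx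
  rw [betaIter_succ β (s + 1)] at hx0
  have h2 : (Fstar R p).map (betaIter β (s + 1)) (β x) = 0 := by
    have h2' : eqToHom (Functor.congr_obj (Fcomm (A := R) (p := p) (s + 1)) M)
        ((Fstar R p).map (betaIter β (s + 1)) (β x)) = 0 := hx0
    exact (eqToHom_apply_eq_zero _ _).mp h2'
  obtain ⟨y, hy⟩ := Fstar_exact p n (betaIter β (s + 1)) (β x) h2
  have hcomp : ModuleCat.ofHom (LinearMap.ker (betaIter β (s + 1)).hom).subtype ≫ betaIter β s = 0 := by
    apply ModuleCat.hom_ext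
    apply LinearMap.ext
    rintro ⟨c, hc⟩
    rw [← h] at hc
    exact hc
  have h3 : (Fstar R p).map (betaIter β s) (β x) = 0 := by
    rw [← hy]
    have hcc : (Fstar R p).map (ModuleCat.ofHom (LinearMap.ker (betaIter β (s + 1)).hom).subtype) ≫
        (Fstar R p).map (betaIter β s) = 0 := by
      rw [← CategoryTheory.Functor.map_comp, hcomp, Fstar_map_zero]
    exact LinearMap.congr_fun (congrArg ModuleCat.Hom.hom hcc) y
  show betaIter β (s + 1) x = 0
  rw [betaIter_succ β s]
  have h4 : eqToHom (Functor.congr_obj (Fcomm (A := R) (p := p) s) M)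
      ((Fstar R p).map (betaIter β s) (β x)) = 0 := by
    rw [h3, map_zero]
  exact h4

lemma ker_stab_all {M : ModuleCat R} (β : M ⟶ (Fstar R p).obj M) (r : ℕ)
    (h : LinearMap.ker (betaIter β r).hom = LinearMap.ker (betaIter β (r + 1)).hom) (m : ℕ) :
    LinearMap.ker (betaIter β (r + m)).hom = LinearMap.ker (betaIter β r).hom := by
  have H : ∀ m : ℕ, LinearMap.ker (betaIter β (r + m)).hom =
      LinearMap.ker (betaIter β (r + m + 1)).hom := by
    intro m
    induction m with
    | zero => exact h
    | succ m ih => exact ker_stab p n β (r + m) ih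
  induction m with
  | zero => rfl
  | succ m ih => exact (H m).symm.trans ih

end Exactness

/-- If `r ≥ 1` satisfies `ker β_r = ker β_{r+1}`, then the direct limit `𝓜`
of the system `M̄ → F^*(M̄) → F^{*2}(M̄) → ⋯` is zero if and only if `β_r = 0`. -/
theorem stmt_2 (p n : ℕ) [Fact p.Prime] (M : ModuleCat (Rbar p n))
    [Module.Finite (Rbar p n) M] (β : M ⟶ (Fstar (Rbar p n) p).obj M)
    (r : ℕ) (hr : 1 ≤ r)
    (hker : LinearMap.ker (betaIter β r).hom = LinearMap.ker (betaIter β (r + 1)).hom) :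
    IsZero (genLimit β) ↔ betaIter β r = 0 := by
  constructor
  · intro hz
    have hall : ∀ x : M, ∃ k, betaIter β k x = 0 := by
      intro x
      have h0 : colimit.ι (genSystem β) 0 x = 0 := by
        have h00 : colimit.ι (genSystem β) 0 = 0 := hz.eq_of_tgt _ _
        rw [h00]
        rfl
      obtain ⟨j', i, hi⟩ := Concrete.colimit_rep_eq_zero (Rbar p n) (genSystem β) 0 x h0
      refine ⟨j', ?_⟩
      rw [← genSystem_map_from_zero β j',
        show homOfLE (Nat.zero_le j') = i from Subsingleton.elim _ _]
      exact hi
    choose k hk using hall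
    obtain ⟨s, hs⟩ := (Module.Finite.fg_top : (⊤ : Submodule (Rbar p n) M).FG)
    have hK : LinearMap.ker (betaIter β (r + Finset.sup s k)).hom = ⊤ := by
      rw [eq_top_iff, ← hs, Submodule.span_le]
      intro x hx
      exact ker_mono β (le_trans (Finset.le_sup (Finset.mem_coe.mp hx))
        (Nat.le_add_left _ _)) (hk x)
    have hfin : LinearMap.ker (betaIter β r).hom = ⊤ := by
      rw [← ker_stab_all p n β r hker (Finset.sup s k)]
      exact hK
    exact ModuleCat.hom_ext (LinearMap.ker_eq_top.mp hfin)
  · intro h0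
    have hzero : ∀ x : (genLimit β), x = 0 := by
      intro x
      obtain ⟨j, y, rfl⟩ := Concrete.colimit_exists_rep (genSystem β) x
      have hmap : (genSystem β).map (homOfLE (Nat.le_add_right j r)) = 0 := by
        rw [genSystem_map_add β j r, h0, FstarIter_map_zero, Limits.zero_comp]
        rfl
      rw [← colimit.w_apply (genSystem β) (homOfLE (Nat.le_add_right j r)) y, hmap]
      have hz0 : ((0 : (genSystem β).obj j ⟶ (genSystem β).obj (j + r))) y = 0 := rfl
      erw [hz0, map_zero]
      rfl
    have : Subsingleton (genLimit β) := ⟨fun a b => by rw [hzero a, hzero b]⟩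
    exact ModuleCat.isZero_of_subsingleton _

end
end

section
/- Let M be a finitely generated module over R = ℤ[x₁,…,xₙ]. Then for all but finitely many prime integers p, the following holds: for every associated prime 𝔭 of M, the natural map Γ_𝔭(M)/pΓ_𝔭(M) → M/pM (induced by the inclusion Γ_𝔭(M) ⊆ M followed by reduction modulo p) is injective, and its image equals Γ_{pR+𝔭}(M/pM); in particular Γ_𝔭(M)/pΓ_𝔭(M) ≅ Γ_{pR+𝔭}(M̄). -/
noncomputable section

/-- `R = ℤ[x₁,…,xₙ]`. -/
abbrev Rint (n : ℕ) : Type := MvPolynomial (Fin n) ℤ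

/-- `Γ_𝔞(N) = {x ∈ N | 𝔞ᵏ x = 0 for some k ≥ 0}`, the `𝔞`-torsion submodule. -/
def Gamma {A : Type*} [CommRing A] (I : Ideal A) {N : Type*} [AddCommGroup N] [Module A N] :
    Submodule A N where
  carrier := {x | ∃ k : ℕ, ∀ a ∈ I ^ k, a • x = 0}
  zero_mem' := ⟨0, fun a _ => smul_zero a⟩
  add_mem' := by
    rintro x y ⟨k, hk⟩ ⟨l, hl⟩
    refine ⟨k + l, fun a ha => ?_⟩
    rw [smul_add, hk a (Ideal.pow_le_pow_right (Nat.le_add_right k l) ha),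
      hl a (Ideal.pow_le_pow_right (Nat.le_add_left l k) ha), add_zero]
  smul_mem' := by
    rintro c x ⟨k, hk⟩
    exact ⟨k, fun a ha => by rw [smul_comm, hk a ha, smul_zero]⟩

/-- `pN`, the submodule of multiples of `p`. -/
abbrev pSM (n : ℕ) (p : ℕ) (N : Type*) [AddCommGroup N] [Module (Rint n) N] :
    Submodule (Rint n) N :=
  Ideal.span {(p : Rint n)} • (⊤ : Submodule (Rint n) N)

/-- The natural map `Γ_𝔭(M)/pΓ_𝔭(M) → M/pM` induced by the inclusion `Γ_𝔭(M) ⊆ M`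
followed by reduction modulo `p`. -/
noncomputable def gammaModP (n p : ℕ) (M : Type*) [AddCommGroup M] [Module (Rint n) M]
    (𝔭 : Ideal (Rint n)) :
    ((Gamma 𝔭 (N := M)) ⧸ pSM n p (Gamma 𝔭 (N := M))) →ₗ[Rint n] (M ⧸ pSM n p M) :=
  Submodule.mapQ _ _ (Gamma 𝔭 (N := M)).subtype
    (Submodule.map_le_iff_le_comap.mp (by
      rw [Submodule.map_smul'']
      exact smul_mono_right (Ideal.span {(p : Rint n)}) le_top))

section Aux

variable {A : Type*} [CommRing A] {M : Type*} [AddCommGroup M] [Module A M]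

lemma mem_Gamma {I : Ideal A} {x : M} :
    x ∈ Gamma I (N := M) ↔ ∃ k : ℕ, ∀ a ∈ I ^ k, a • x = 0 := Iff.rfl

lemma mem_span_smul_top {r : A} {x : M} :
    x ∈ Ideal.span {r} • (⊤ : Submodule A M) ↔ ∃ y : M, r • y = x := by
  constructor
  · intro h
    refine Submodule.smul_induction_on h ?_ ?_
    · rintro a ha m -
      obtain ⟨c, rfl⟩ := Ideal.mem_span_singleton'.mp ha
      exact ⟨c • m, by rw [smul_comm, ← mul_smul]⟩
    · rintro x y ⟨u, rfl⟩ ⟨v, rfl⟩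
      exact ⟨u + v, smul_add r u v⟩
  · rintro ⟨y, rfl⟩
    exact Submodule.smul_mem_smul (Ideal.mem_span_singleton_self r) trivial

lemma gamma_uniform [IsNoetherian A M] (I : Ideal A) :
    ∃ k : ℕ, ∀ a ∈ I ^ k, ∀ x ∈ Gamma I (N := M), a • x = 0 := by
  obtain ⟨s, hs⟩ := (IsNoetherian.noetherian (Gamma I (N := M)) : (Gamma I (N := M)).FG)
  have hgen : ∀ g : s, ∃ k : ℕ, ∀ a ∈ I ^ k, a • (g : M) = 0 := by
    intro g
    exact (hs ▸ Submodule.subset_span g.2 : (g : M) ∈ Gamma I (N := M))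
  choose k hk using hgen
  set K := s.attach.sup k with hK
  let P : Submodule A M :=
    { carrier := {x | ∀ a ∈ I ^ K, a • x = 0}
      zero_mem' := fun a _ => smul_zero a
      add_mem' := by
        rintro x y hx hy a ha
        rw [smul_add, hx a ha, hy a ha, add_zero]
      smul_mem' := by
        rintro c x hx a ha
        rw [smul_comm, hx a ha, smul_zero] }
  have hle : Gamma I (N := M) ≤ P := by
    rw [← hs, Submodule.span_le]
    intro g hg a ha
    exact hk ⟨g, hg⟩ a
      (Ideal.pow_le_pow_right (Finset.le_sup (Finset.mem_attach s ⟨g, hg⟩)) ha)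
  exact ⟨K, fun a ha x hx => hle hx a ha⟩

lemma gamma_quot_eq_bot [IsNoetherian A M] (I : Ideal A) :
    Gamma I (N := M ⧸ Gamma I (N := M)) = ⊥ := by
  obtain ⟨k, hk⟩ := gamma_uniform (A := A) (M := M) I
  rw [eq_bot_iff]
  intro xb hxb
  obtain ⟨x, rfl⟩ := Submodule.Quotient.mk_surjective _ xb
  obtain ⟨j, hj⟩ := mem_Gamma.mp hxb
  rw [Submodule.mem_bot, Submodule.Quotient.mk_eq_zero]
  refine ⟨k + j, fun a ha => ?_⟩
  have hle : I ^ k * I ^ j ≤ LinearMap.ker (LinearMap.toSpanSingleton A M x) := by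
    rw [Ideal.mul_le]
    intro r hr s hs
    have hsx : s • x ∈ Gamma I (N := M) := by
      have h1 := hj s hs
      rwa [← Submodule.Quotient.mk_smul, Submodule.Quotient.mk_eq_zero] at h1
    simp only [LinearMap.mem_ker, LinearMap.toSpanSingleton_apply, mul_smul]
    exact hk r hr _ hsx
  have : a ∈ LinearMap.ker (LinearMap.toSpanSingleton A M x) := by
    rw [pow_add] at ha; exact hle ha
  simpa using this

lemma torsion_primes_finite [IsNoetherianRing A] [Module.Finite A M] :
    {p : ℕ | p.Prime ∧ ∃ x : M, x ≠ 0 ∧ (p : A) • x = 0}.Finite := by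
  let T : Submodule A M :=
    { carrier := {x | ∃ c : ℤ, c ≠ 0 ∧ (c : A) • x = 0}
      zero_mem' := ⟨1, one_ne_zero, smul_zero _⟩
      add_mem' := by
        rintro x y ⟨c, hc, hcx⟩ ⟨d, hd, hdy⟩
        refine ⟨c * d, mul_ne_zero hc hd, ?_⟩
        have hcd : ((c * d : ℤ) : A) = (c : A) * (d : A) := by push_cast; ring
        have t1 : ((c : A) * d) • x = 0 := by rw [mul_comm, mul_smul, hcx, smul_zero]
        have t2 : ((c : A) * d) • y = 0 := by rw [mul_smul, hdy, smul_zero]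
        rw [hcd, smul_add, t1, t2, add_zero]
      smul_mem' := by
        rintro r x ⟨c, hc, hcx⟩
        exact ⟨c, hc, by rw [smul_comm, hcx, smul_zero]⟩ }
  obtain ⟨s, hs⟩ := (IsNoetherian.noetherian T : T.FG)
  have hgen : ∀ g : s, ∃ c : ℤ, c ≠ 0 ∧ (c : A) • (g : M) = 0 := fun g =>
    (hs ▸ Submodule.subset_span g.2 : (g : M) ∈ T)
  choose c hc0 hc using hgen
  set m : ℤ := ∏ g ∈ s.attach, c g with hm
  have hm0 : m ≠ 0 := Finset.prod_ne_zero_iff.mpr fun g _ => hc0 g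
  have key : ∀ x ∈ T, (m : A) • x = 0 := by
    intro x hx
    rw [← hs] at hx
    induction hx using Submodule.span_induction with
    | mem g hg =>
      obtain ⟨d, hd⟩ := Finset.dvd_prod_of_mem c (Finset.mem_attach s ⟨g, hg⟩)
      rw [← hm] at hd
      rw [hd]
      push_cast
      rw [mul_comm, mul_smul, hc ⟨g, hg⟩, smul_zero]
    | zero => rw [smul_zero]
    | add x y _ _ hx hy => rw [smul_add, hx, hy, add_zero]
    | smul r x _ hx => rw [smul_comm, hx, smul_zero]
  have hsub : {p : ℕ | p.Prime ∧ ∃ x : M, x ≠ 0 ∧ (p : A) • x = 0} ⊆ Set.Iic m.natAbs := by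
    rintro p ⟨hp, x, hx0, hpx⟩
    have hxT : x ∈ T := ⟨(p : ℤ), Int.natCast_ne_zero.mpr hp.ne_zero, by push_cast; exact hpx⟩
    have hmx : (m : A) • x = 0 := key x hxT
    have hnx : ((m.natAbs : ℤ) : A) • x = 0 := by
      rcases Int.natAbs_eq m with h | h
      · rw [← h]; exact hmx
      · have h' : (m.natAbs : ℤ) = -m := by conv_rhs => rw [h, neg_neg]
        rw [h', Int.cast_neg, neg_smul, hmx, neg_zero]
    have hdvd : p ∣ m.natAbs := by
      by_contra hnd
      have hcop : IsCoprime (p : ℤ) (m.natAbs : ℤ) :=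
        Nat.isCoprime_iff_coprime.mpr ((Nat.Prime.coprime_iff_not_dvd hp).mpr hnd)
      obtain ⟨a, b, hab⟩ := hcop
      have h1 : ((a * (p : ℤ) + b * (m.natAbs : ℤ)) : A) • x = x := by
        have hone : ((a * (p : ℤ) + b * (m.natAbs : ℤ)) : A) = 1 := by
          exact_mod_cast congrArg (fun z : ℤ => (z : A)) hab
        rw [hone, one_smul]
      have hpx' : (((p : ℕ) : ℤ) : A) • x = 0 := by rw [Int.cast_natCast]; exact hpx
      rw [add_smul, mul_smul, mul_smul, hpx', hnx, smul_zero, smul_zero, add_zero] at h1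
      exact hx0 h1.symm
    exact Set.mem_Iic.mpr (Nat.le_of_dvd (Nat.pos_of_ne_zero (Int.natAbs_ne_zero.mpr hm0)) hdvd)
  exact (Set.finite_Iic _).subset hsub

lemma isAssociatedPrime_sub_or_quot [IsNoetherianRing A] {P : Ideal A} (h : IsAssociatedPrime P M)
    (K : Submodule A M) :
    IsAssociatedPrime P K ∨ IsAssociatedPrime P (M ⧸ K) := by
  obtain ⟨hP, x, hx⟩ := isAssociatedPrime_iff.mp h
  rw [Submodule.bot_colon'] at hx
  by_cases hcase : ∃ a : A, a • x ∈ K ∧ a • x ≠ 0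
  · obtain ⟨a, haK, ha0⟩ := hcase
    left
    have haP : a ∉ P := fun haP =>
      ha0 ((Submodule.mem_annihilator_span_singleton x a).mp (hx ▸ haP))
    refine isAssociatedPrime_iff.mpr ⟨hP, ⟨a • x, haK⟩, ?_⟩
    rw [Submodule.bot_colon']
    ext r
    rw [Submodule.mem_annihilator_span_singleton]
    have hsm : (r • (⟨a • x, haK⟩ : K) = 0) ↔ r • (a • x) = 0 := by
      rw [Subtype.ext_iff]; rfl
    rw [hsm, smul_smul, ← Submodule.mem_annihilator_span_singleton x (r * a), ← hx]
    constructor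
    · exact fun hr => P.mul_mem_right a hr
    · intro hra
      rcases hP.mem_or_mem hra with h | h
      · exact h
      · exact absurd h haP
  · right
    push_neg at hcase
    refine isAssociatedPrime_iff.mpr ⟨hP, Submodule.Quotient.mk x, ?_⟩
    rw [Submodule.bot_colon']
    ext r
    rw [Submodule.mem_annihilator_span_singleton, ← Submodule.Quotient.mk_smul,
      Submodule.Quotient.mk_eq_zero]
    constructor
    · intro hr
      have h1 : r • x = 0 := (Submodule.mem_annihilator_span_singleton x r).mp (hx ▸ hr)
      rw [h1]; exact K.zero_mem
    · intro hrK
      have h1 := hcase r hrK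
      rw [hx, Submodule.mem_annihilator_span_singleton]
      exact h1

lemma isAssociatedPrime_span_singleton_eq {P Q : Ideal A} (hP : P.IsPrime) (x : M)
    (hann : P = (A ∙ x).annihilator)
    (hQ : IsAssociatedPrime Q (A ∙ x : Submodule A M)) : Q = P := by
  have hker : LinearMap.ker (LinearMap.toSpanSingleton A M x) = P := by
    ext r
    rw [LinearMap.mem_ker, hann, Submodule.mem_annihilator_span_singleton,
      LinearMap.toSpanSingleton_apply]
  have e1 : (A ⧸ P) ≃ₗ[A] (A ∙ x : Submodule A M) :=
    (Submodule.quotEquivOfEq _ _ hker.symm).trans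
      ((LinearMap.toSpanSingleton A M x).quotKerEquivRange.trans
        (LinearEquiv.ofEq _ _ (LinearMap.span_singleton_eq_range A M x).symm))
  have h2 : IsAssociatedPrime Q (A ⧸ P) := (e1.isAssociatedPrime_iff).mpr hQ
  have h3 := IsAssociatedPrime.eq_radical hP.isPrimary h2
  rwa [hP.radical] at h3

lemma associatedPrimes_finite (A M : Type*) [CommRing A] [AddCommGroup M] [Module A M]
    [IsNoetherianRing A] [IsNoetherian A M] : (associatedPrimes A M).Finite := by
  have H : ∀ N : Submodule A M, (associatedPrimes A (M ⧸ N)).Finite := by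
    intro N₀
    refine IsNoetherian.induction
      (P := fun N => (associatedPrimes A (M ⧸ N)).Finite) (fun N ih => ?_) N₀
    show (associatedPrimes A (M ⧸ N)).Finite
    by_cases hN : N = ⊤
    · have : Subsingleton (M ⧸ N) := Submodule.Quotient.subsingleton_iff.mpr hN
      rw [associatedPrimes.eq_empty_of_subsingleton]
      exact Set.finite_empty
    · obtain ⟨z, hz⟩ : ∃ z : M, z ∉ N := by
        by_contra h
        push_neg at h
        exact hN (eq_top_iff.mpr fun z _ => h z)
      have hz0 : (Submodule.Quotient.mk z : M ⧸ N) ≠ 0 := by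
        rwa [Ne, Submodule.Quotient.mk_eq_zero]
      obtain ⟨P, hP, -⟩ := exists_le_isAssociatedPrime_of_isNoetherianRing A _ hz0
      obtain ⟨hPp, y, hy⟩ := isAssociatedPrime_iff.mp hP
      rw [Submodule.bot_colon'] at hy
      have hy0 : y ≠ 0 := by
        rintro rfl
        apply hPp.ne_top
        rw [hy, Submodule.span_singleton_eq_bot.mpr rfl, Submodule.annihilator_bot]
      obtain ⟨w, rfl⟩ := Submodule.Quotient.mk_surjective N y
      have hwN : w ∉ N := fun hw => hy0 ((Submodule.Quotient.mk_eq_zero N).mpr hw)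
      have hlt : N < N ⊔ A ∙ w := by
        refine lt_of_le_of_ne le_sup_left fun h => hwN ?_
        have : w ∈ N ⊔ A ∙ w := Submodule.mem_sup_right (Submodule.mem_span_singleton_self w)
        rwa [← h] at this
      have hfin' : (associatedPrimes A (M ⧸ (N ⊔ A ∙ w))).Finite := ih _ hlt
      have hsub : associatedPrimes A (M ⧸ N) ⊆
          insert P (associatedPrimes A (M ⧸ (N ⊔ A ∙ w))) := by
        intro J hJ
        rcases isAssociatedPrime_sub_or_quot hJ ((A ∙ w).map N.mkQ) with h | h
        · left
          have hKeq : (A ∙ w).map N.mkQ = (A ∙ (Submodule.Quotient.mk w : M ⧸ N)) := by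
            rw [Submodule.map_span, Set.image_singleton]
            rfl
          rw [hKeq] at h
          exact isAssociatedPrime_span_singleton_eq hPp _ hy h
        · right
          exact ((Submodule.quotientQuotientEquivQuotientSup N
            (A ∙ w)).isAssociatedPrime_iff).mp h
      exact (hfin'.insert P).subset hsub
  have e := LinearEquiv.AssociatedPrimes.eq (R := A)
    (Submodule.quotEquivOfEqBot (⊥ : Submodule A M) rfl)
  exact e ▸ H ⊥

lemma exists_gamma_regular [IsNoetherianRing A] [IsNoetherian A M]
    {𝔭 : Ideal A} (h𝔭 : 𝔭.IsPrime) (hG : Gamma 𝔭 (N := M) = ⊥) :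
    ∃ f ∈ 𝔭, ∀ x : M, f • x = 0 → x = 0 := by
  by_contra hcon
  push_neg at hcon
  have hfin := associatedPrimes_finite A M
  have hsub : (𝔭 : Set A) ⊆ ⋃ P ∈ hfin.toFinset, ((P : Ideal A) : Set A) := by
    intro f hf
    obtain ⟨x, hfx, hx0⟩ := hcon f hf
    have hzd : f ∈ {r : A | ∃ x : M, x ≠ 0 ∧ r • x = 0} := ⟨x, hx0, hfx⟩
    rw [← biUnion_associatedPrimes_eq_zero_divisors A M] at hzd
    simpa [Set.Finite.mem_toFinset] using hzd
  obtain ⟨P, hPs, hle⟩ := (Ideal.subset_union_prime (⊥ : Ideal A) ⊥ fun P hPs _ _ =>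
      (hfin.mem_toFinset.mp hPs).isPrime).mp hsub
  obtain ⟨hPp, y, hy⟩ := isAssociatedPrime_iff.mp (hfin.mem_toFinset.mp hPs)
  rw [Submodule.bot_colon'] at hy
  have hy0 : y ≠ 0 := by
    rintro rfl
    apply hPp.ne_top
    rw [hy, Submodule.span_singleton_eq_bot.mpr rfl, Submodule.annihilator_bot]
  have hyG : y ∈ Gamma 𝔭 (N := M) := by
    refine ⟨1, fun a ha => ?_⟩
    rw [pow_one] at ha
    exact (Submodule.mem_annihilator_span_singleton y a).mp (hy ▸ hle ha)
  rw [hG, Submodule.mem_bot] at hyG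
  exact hy0 hyG

lemma sup_pow_le (I J : Ideal A) (k : ℕ) : (I ⊔ J) ^ k ≤ I ⊔ J ^ k := by
  induction k with
  | zero => rw [pow_zero, pow_zero]; exact le_sup_right
  | succ k ih =>
    rw [pow_succ]
    refine le_trans (Ideal.mul_mono ih le_rfl) ?_
    rw [Ideal.mul_le]
    intro r hr s hs
    obtain ⟨r1, hr1, r2, hr2, rfl⟩ := Submodule.mem_sup.mp hr
    obtain ⟨s1, hs1, s2, hs2, rfl⟩ := Submodule.mem_sup.mp hs
    have hre : (r1 + r2) * (s1 + s2) = (r1 * (s1 + s2) + r2 * s1) + r2 * s2 := by ring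
    rw [hre]
    refine Ideal.add_mem _ (Ideal.mem_sup_left ?_) (Ideal.mem_sup_right ?_)
    · exact Ideal.add_mem _ (I.mul_mem_right _ hr1) (I.mul_mem_left _ hs1)
    · rw [pow_succ]
      exact Ideal.mul_mem_mul hr2 hs2

end Aux

/-- Let `M` be a finitely generated module over `R = ℤ[x₁,…,xₙ]`. For all but
finitely many prime integers `p`: for every associated prime `𝔭` of `M`, the natural map
`Γ_𝔭(M)/pΓ_𝔭(M) → M/pM` is injective with image `Γ_{pR+𝔭}(M/pM)`; in particular
`Γ_𝔭(M)/pΓ_𝔭(M) ≅ Γ_{pR+𝔭}(M̄)`. -/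
theorem stmt_6 (n : ℕ) (M : Type) [AddCommGroup M] [Module (Rint n) M]
    [Module.Finite (Rint n) M] :
    {p : ℕ | p.Prime ∧
      ¬ (∀ 𝔭 ∈ associatedPrimes (Rint n) M,
          Function.Injective (gammaModP n p M 𝔭) ∧
          LinearMap.range (gammaModP n p M 𝔭) =
            Gamma (Ideal.span {(p : Rint n)} ⊔ 𝔭) (N := M ⧸ pSM n p M))}.Finite := by
  classical
  have key : ∀ 𝔭 : Ideal (Rint n), ∃ S : Set ℕ, S.Finite ∧
      (𝔭 ∈ associatedPrimes (Rint n) M → ∀ p : ℕ, p.Prime → p ∉ S →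
        Function.Injective (gammaModP n p M 𝔭) ∧
        LinearMap.range (gammaModP n p M 𝔭) =
          Gamma (Ideal.span {(p : Rint n)} ⊔ 𝔭) (N := M ⧸ pSM n p M)) := by
    intro 𝔭
    by_cases h𝔭 : 𝔭 ∈ associatedPrimes (Rint n) M
    swap
    · exact ⟨∅, Set.finite_empty, fun h => absurd h h𝔭⟩
    have hprime : 𝔭.IsPrime := h𝔭.isPrime
    set N : Submodule (Rint n) M := Gamma 𝔭 (N := M) with hN
    have hGQ : Gamma 𝔭 (N := M ⧸ N) = ⊥ := gamma_quot_eq_bot 𝔭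
    obtain ⟨f, hf𝔭, hfreg⟩ := exists_gamma_regular hprime hGQ
    set C : Type := (M ⧸ N) ⧸ (Ideal.span {f} • (⊤ : Submodule (Rint n) (M ⧸ N))) with hC
    refine ⟨{p : ℕ | p.Prime ∧ ∃ x : M ⧸ N, x ≠ 0 ∧ (p : Rint n) • x = 0} ∪
        {p : ℕ | p.Prime ∧ ∃ x : C, x ≠ 0 ∧ (p : Rint n) • x = 0},
      (torsion_primes_finite).union (torsion_primes_finite), fun _ p hp hpS => ?_⟩
    have hQtor : ∀ x : M ⧸ N, (p : Rint n) • x = 0 → x = 0 := by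
      intro x hx
      by_contra hx0
      exact hpS (Or.inl ⟨hp, x, hx0, hx⟩)
    have hCtor : ∀ x : C, (p : Rint n) • x = 0 → x = 0 := by
      intro x hx
      by_contra hx0
      exact hpS (Or.inr ⟨hp, x, hx0, hx⟩)
    constructor
    · -- injectivity
      rw [← LinearMap.ker_eq_bot, LinearMap.ker_eq_bot']
      intro ξ hξ
      obtain ⟨x, rfl⟩ := Submodule.Quotient.mk_surjective _ ξ
      simp only [gammaModP, Submodule.mapQ_apply] at hξ
      rw [Submodule.Quotient.mk_eq_zero] at hξ
      obtain ⟨y, hy⟩ := mem_span_smul_top.mp hξ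
      have hyN : y ∈ N := by
        have h1 : (p : Rint n) • (N.mkQ y) = 0 := by
          rw [← map_smul, hy]
          exact (Submodule.Quotient.mk_eq_zero _).mpr x.2
        have h2 := hQtor _ h1
        rwa [Submodule.mkQ_apply, Submodule.Quotient.mk_eq_zero] at h2
      rw [Submodule.Quotient.mk_eq_zero]
      exact mem_span_smul_top.mpr ⟨⟨y, hyN⟩, Subtype.ext hy⟩
    · -- range
      have hrange : LinearMap.range (gammaModP n p M 𝔭) =
          N.map (pSM n p M).mkQ := by
        ext ζ
        constructor
        · rintro ⟨ξ, rfl⟩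
          obtain ⟨x, rfl⟩ := Submodule.Quotient.mk_surjective _ ξ
          simp only [gammaModP, Submodule.mapQ_apply]
          exact ⟨(x : M), x.2, rfl⟩
        · rintro ⟨x, hx, rfl⟩
          exact ⟨Submodule.Quotient.mk ⟨x, hx⟩, by
            simp only [gammaModP, Submodule.mapQ_apply]; rfl⟩
      rw [hrange]
      apply le_antisymm
      · rintro ζ ⟨x, hx, rfl⟩
        obtain ⟨k, hk⟩ := hx
        refine ⟨k, fun a ha => ?_⟩
        obtain ⟨b, hb, c, hc, rfl⟩ := Submodule.mem_sup.mp
          (sup_pow_le (Ideal.span {(p : Rint n)}) 𝔭 k ha)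
        rw [Submodule.mkQ_apply, ← Submodule.Quotient.mk_smul, Submodule.Quotient.mk_eq_zero]
        have h1 : (b + c) • x = b • x := by rw [add_smul, hk c hc, add_zero]
        rw [h1]
        obtain ⟨r, hr⟩ := Ideal.mem_span_singleton'.mp hb
        rw [← hr, mul_smul]
        exact Submodule.smul_mem _ r (mem_span_smul_top.mpr ⟨x, rfl⟩)
      · intro ζ hζ
        obtain ⟨z, rfl⟩ := Submodule.Quotient.mk_surjective _ ζ
        obtain ⟨k, hk⟩ := hζ
        have hfk : (f ^ k) • z ∈ pSM n p M := by
          have hmem : f ^ k ∈ (Ideal.span {(p : Rint n)} ⊔ 𝔭) ^ k :=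
            Ideal.pow_mem_pow (Ideal.mem_sup_right hf𝔭) k
          have h1 := hk _ hmem
          rwa [← Submodule.Quotient.mk_smul, Submodule.Quotient.mk_eq_zero] at h1
        have step : ∀ w : M ⧸ N, f • w ∈ pSM n p (M ⧸ N) → w ∈ pSM n p (M ⧸ N) := by
          intro w hw
          obtain ⟨v, hv⟩ := mem_span_smul_top.mp hw
          have h1 : (p : Rint n) •
              ((Ideal.span {f} • (⊤ : Submodule (Rint n) (M ⧸ N))).mkQ v) = 0 := by
            rw [← map_smul, hv, Submodule.mkQ_apply, Submodule.Quotient.mk_eq_zero]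
            exact mem_span_smul_top.mpr ⟨w, rfl⟩
          have h2 := hCtor _ h1
          rw [Submodule.mkQ_apply, Submodule.Quotient.mk_eq_zero] at h2
          obtain ⟨t, ht⟩ := mem_span_smul_top.mp h2
          have h3 : f • (w - (p : Rint n) • t) = 0 := by
            rw [smul_sub, smul_comm, ← hv, ← ht, smul_smul]
            exact sub_self _
          have h4 := hfreg _ h3
          rw [sub_eq_zero] at h4
          exact h4 ▸ mem_span_smul_top.mpr ⟨t, rfl⟩
        have hind : ∀ (j : ℕ) (w : M ⧸ N),
            f ^ j • w ∈ pSM n p (M ⧸ N) → w ∈ pSM n p (M ⧸ N) := by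
          intro j
          induction j with
          | zero => intro w hw; rwa [pow_zero, one_smul] at hw
          | succ j ih =>
            intro w hw
            rw [pow_succ, mul_comm, mul_smul] at hw
            exact ih w (step _ hw)
        obtain ⟨u, hu⟩ := mem_span_smul_top.mp hfk
        have hπ : f ^ k • (N.mkQ z) ∈ pSM n p (M ⧸ N) := by
          rw [← map_smul, ← hu, map_smul]
          exact mem_span_smul_top.mpr ⟨N.mkQ u, rfl⟩
        have hz' := hind k _ hπ
        obtain ⟨q, hq⟩ := mem_span_smul_top.mp hz'
        obtain ⟨y, rfl⟩ := Submodule.Quotient.mk_surjective _ q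
        have hzy : z - (p : Rint n) • y ∈ N := by
          rw [← Submodule.Quotient.mk_eq_zero N]
          have h1 : N.mkQ (z - (p : Rint n) • y) = 0 := by
            rw [map_sub, map_smul, Submodule.mkQ_apply, Submodule.mkQ_apply, hq]
            exact sub_self _
          exact h1
        refine ⟨z - (p : Rint n) • y, hzy, ?_⟩
        rw [Submodule.mkQ_apply, Submodule.Quotient.eq]
        have : z - (p : Rint n) • y - z = -((p : Rint n) • y) := by abel
        rw [this]
        exact Submodule.neg_mem _ (mem_span_smul_top.mpr ⟨y, rfl⟩)
  choose S hSfin hS using key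
  have hassfin : (associatedPrimes (Rint n) M).Finite := associatedPrimes_finite _ _
  refine Set.Finite.subset (hassfin.biUnion fun 𝔭 _ => hSfin 𝔭) ?_
  rintro p ⟨hp, hbad⟩
  by_contra hnot
  apply hbad
  intro 𝔭 h𝔭
  have hpS : p ∉ S 𝔭 := fun hmem => hnot (Set.mem_biUnion h𝔭 hmem)
  exact hS 𝔭 h𝔭 p hp hpS
end
end

section
/- Let p be a prime integer, j ≥ 1, and set q = p^j. Let f, m ∈ R̄ = (ℤ/pℤ)[x₁,…,xₙ] be nonzero polynomials of total degrees d and D respectively, and let (i₁,…,iₙ) be a multi-index with 0 ≤ i_s ≤ q − 1 for every s. Write x₁^{i₁}⋯xₙ^{iₙ}·f^{q−1}·m = Σ_ā x₁^{a₁}⋯xₙ^{aₙ}·(g_ā)^{q}, the unique decomposition with multi-indices ā satisfying 0 ≤ a_s ≤ q − 1 and g_ā ∈ R̄. Then the top component g_{\overline{q−1}} (corresponding to ā = (q−1,…,q−1)) is either zero or has total degree at most max{D, d}. -/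
noncomputable section

/-- The top multi-index `(q−1,…,q−1)`, `q = p^j`. -/
def topIdx (p n j : ℕ) [Fact p.Prime] : Fin n → Fin (p ^ j) :=
  fun _ => ⟨p ^ j - 1, Nat.sub_lt (pow_pos (Fact.out : p.Prime).pos j) one_pos⟩

open MvPolynomial Finsupp

lemma prodX {p n : ℕ} (a : Fin n → ℕ) :
    (∏ s : Fin n, (MvPolynomial.X s : Rbar p n) ^ a s) =
      MvPolynomial.monomial (Finsupp.equivFunOnFinite.symm a) 1 := by
  rw [← MvPolynomial.prod_X_pow_eq_monomial]
  refine (Finset.prod_subset (Finset.subset_univ _) ?_).symm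
  intro x _ hx
  have : a x = 0 := by
    simpa using Finsupp.notMem_support_iff.mp hx
  simp [this]

lemma coeff_pow_pj {p n : ℕ} [Fact p.Prime] (j : ℕ) (h : Rbar p n) (ν : Fin n →₀ ℕ) :
    MvPolynomial.coeff ν (h ^ p ^ j) =
      ∑ μ ∈ h.support, if p ^ j • μ = ν then (MvPolynomial.coeff μ h) ^ p ^ j else 0 := by
  have hchar : CharP (Rbar p n) p := inferInstance
  have key : h ^ p ^ j = ∑ μ ∈ h.support,
      MvPolynomial.monomial (p ^ j • μ) ((MvPolynomial.coeff μ h) ^ p ^ j) := by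
    have := congrArg (iterateFrobenius (Rbar p n) p j) h.support_sum_monomial_coeff.symm
    rw [map_sum] at this
    simp only [iterateFrobenius_def, monomial_pow] at this
    exact this
  rw [key, MvPolynomial.coeff_sum]
  refine Finset.sum_congr rfl fun μ _ => ?_
  rw [MvPolynomial.coeff_monomial]

lemma smul_inj {n q : ℕ} (hq : 0 < q) {μ μ' : Fin n →₀ ℕ} (h : q • μ = q • μ') : μ = μ' := by
  ext s
  have := congrArg (fun f => f s) h
  simp only [Finsupp.smul_apply, smul_eq_mul] at this
  exact Nat.eq_of_mul_eq_mul_left hq this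

lemma coeff_smul_pow {p n : ℕ} [Fact p.Prime] (j : ℕ) (h : Rbar p n) (μ : Fin n →₀ ℕ) :
    MvPolynomial.coeff (p ^ j • μ) (h ^ p ^ j) = (MvPolynomial.coeff μ h) ^ p ^ j := by
  have hq : 0 < p ^ j := pow_pos (Fact.out : p.Prime).pos j
  rw [coeff_pow_pj]
  rw [Finset.sum_eq_single μ]
  · simp
  · intro b _ hb
    rw [if_neg]
    intro hc
    exact hb (smul_inj hq hc)
  · intro hμ
    simp [MvPolynomial.notMem_support_iff.mp hμ, zero_pow hq.ne']

lemma coeff_pow_zero {p n : ℕ} [Fact p.Prime] (j : ℕ) (h : Rbar p n) (ν : Fin n →₀ ℕ)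
    (hν : ∀ μ : Fin n →₀ ℕ, p ^ j • μ ≠ ν) :
    MvPolynomial.coeff ν (h ^ p ^ j) = 0 := by
  rw [coeff_pow_pj]
  exact Finset.sum_eq_zero fun μ _ => if_neg (hν μ)

/-- **Statement 14.** Let `q = p^j`, let `f, m ∈ R̄` be nonzero of total degrees `d` and `D`,
and let `(i₁,…,iₙ)` be a multi-index with `0 ≤ i_s ≤ q−1`. Writing
`x₁^{i₁}⋯xₙ^{iₙ}·f^{q−1}·m = Σ_ā x₁^{a₁}⋯xₙ^{aₙ}·(g_ā)^q` (the unique decomposition with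
`0 ≤ a_s ≤ q−1`), the top component `g_{\overline{q−1}}` is either zero or has total degree
at most `max D d`. -/
theorem stmt_14 (p n j : ℕ) [Fact p.Prime] (hj : 1 ≤ j)
    (f m : Rbar p n) (hf : f ≠ 0) (hm : m ≠ 0) (d D : ℕ)
    (hd : f.totalDegree = d) (hD : m.totalDegree = D)
    (i : Fin n → Fin (p ^ j))
    (g : (Fin n → Fin (p ^ j)) → Rbar p n)
    (hg : (∏ s : Fin n, MvPolynomial.X s ^ (i s : ℕ)) * f ^ (p ^ j - 1) * m =
      ∑ a : Fin n → Fin (p ^ j),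
        (∏ s : Fin n, MvPolynomial.X s ^ (a s : ℕ)) * g a ^ p ^ j) :
    g (topIdx p n j) = 0 ∨ (g (topIdx p n j)).totalDegree ≤ max D d := by
  have hq : 0 < p ^ j := pow_pos (Fact.out : p.Prime).pos j
  by_cases h0 : g (topIdx p n j) = 0
  · exact Or.inl h0
  right
  -- choose a top-degree monomial of g (topIdx p n j)
  obtain ⟨μ, hμmem, hμ⟩ := Finset.exists_mem_eq_sup (g (topIdx p n j)).support
    (MvPolynomial.support_nonempty.mpr h0) (fun s => s.sum fun _ e => e)
  have hT : (g (topIdx p n j)).totalDegree = μ.sum fun _ e => e := hμ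
  -- exponent finsupps
  set eF : (Fin n → Fin (p ^ j)) → (Fin n →₀ ℕ) :=
    fun a => Finsupp.equivFunOnFinite.symm (fun s => (a s : ℕ)) with heF
  set ν : Fin n →₀ ℕ := eF (topIdx p n j) + p ^ j • μ with hν
  have hνs : ∀ s, ν s = (p ^ j - 1) + p ^ j * μ s := by
    intro s
    simp [hν, heF, topIdx]
  -- rewrite hypothesis with monomials
  simp only [prodX] at hg
  -- coefficient of ν in the RHS
  have hcoeff : MvPolynomial.coeff ν
        ((MvPolynomial.monomial (eF i) (1 : ZMod p)) * f ^ (p ^ j - 1) * m)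
      = (MvPolynomial.coeff μ (g (topIdx p n j))) ^ p ^ j := by
    rw [hg, MvPolynomial.coeff_sum]
    rw [Finset.sum_eq_single (topIdx p n j)]
    · rw [MvPolynomial.coeff_monomial_mul', if_pos (le_add_right le_rfl)]
      have : ν - eF (topIdx p n j) = p ^ j • μ := add_tsub_cancel_left _ _
      rw [this, one_mul, coeff_smul_pow]
    · intro a _ hat
      rw [MvPolynomial.coeff_monomial_mul']
      split_ifs with hle
      · rw [one_mul]
        apply coeff_pow_zero
        intro μ' hμ'
        apply hat
        funext s
        have h1 : (a s : ℕ) + p ^ j * μ' s = ν s := by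
          have := congrArg (fun f => f s) hμ'
          simp only [Finsupp.smul_apply, smul_eq_mul, Finsupp.coe_tsub, Pi.sub_apply] at this
          have hles : (eF a) s ≤ ν s := hle s
          simp only [heF, Finsupp.coe_equivFunOnFinite_symm] at this hles ⊢
          omega
        have h2 : (a s : ℕ) = p ^ j - 1 := by
          have h3 := hνs s
          have ha : (a s : ℕ) < p ^ j := (a s).isLt
          have hmod : ((a s : ℕ) + p ^ j * μ' s) % p ^ j = (a s : ℕ) % p ^ j :=
            Nat.add_mul_mod_self_left _ _ _
          have hmod2 : ((p ^ j - 1) + p ^ j * μ s) % p ^ j = (p ^ j - 1) % p ^ j :=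
            Nat.add_mul_mod_self_left _ _ _
          rw [h1, h3, hmod2, Nat.mod_eq_of_lt ha, Nat.mod_eq_of_lt (by omega)] at hmod
          exact hmod.symm
        exact Fin.ext h2
      · rfl
    · intro habs
      exact absurd (Finset.mem_univ _) habs
  have hne : MvPolynomial.coeff ν
      ((MvPolynomial.monomial (eF i) (1 : ZMod p)) * f ^ (p ^ j - 1) * m) ≠ 0 := by
    rw [hcoeff]
    exact pow_ne_zero _ (MvPolynomial.mem_support_iff.mp hμmem)
  -- degree bounds
  have hdeg : (ν.sum fun _ e => e) ≤
      ((MvPolynomial.monomial (eF i) (1 : ZMod p)) * f ^ (p ^ j - 1) * m).totalDegree :=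
    MvPolynomial.le_totalDegree (MvPolynomial.mem_support_iff.mpr hne)
  have hsum : (ν.sum fun _ e => e) = n * (p ^ j - 1) + p ^ j * (g (topIdx p n j)).totalDegree := by
    rw [Finsupp.sum_fintype _ _ (fun _ => rfl)]
    have hμs : (μ.sum fun _ e => e) = ∑ s : Fin n, μ s := Finsupp.sum_fintype _ _ (fun _ => rfl)
    rw [hT, hμs]
    simp only [hνs]
    rw [Finset.sum_add_distrib, Finset.sum_const, Finset.card_univ, Fintype.card_fin,
      ← Finset.mul_sum]
    simp [smul_eq_mul]
  have hub : ((MvPolynomial.monomial (eF i) (1 : ZMod p)) * f ^ (p ^ j - 1) * m).totalDegree ≤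
      n * (p ^ j - 1) + ((p ^ j - 1) * d + D) := by
    calc ((MvPolynomial.monomial (eF i) (1 : ZMod p)) * f ^ (p ^ j - 1) * m).totalDegree
        ≤ ((MvPolynomial.monomial (eF i) (1 : ZMod p)) * f ^ (p ^ j - 1)).totalDegree
            + m.totalDegree := MvPolynomial.totalDegree_mul _ _
      _ ≤ (MvPolynomial.monomial (eF i) (1 : ZMod p)).totalDegree + (f ^ (p ^ j - 1)).totalDegree
            + m.totalDegree := add_le_add_left (MvPolynomial.totalDegree_mul _ _) _
      _ ≤ n * (p ^ j - 1) + (p ^ j - 1) * d + D := by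
          refine add_le_add (add_le_add ?_ ?_) (hD.le)
          · refine le_trans (MvPolynomial.totalDegree_monomial_le _ _) ?_
            rw [Finsupp.sum_fintype _ _ (fun _ => rfl)]
            calc ∑ s : Fin n, (eF i) s ≤ ∑ _s : Fin n, (p ^ j - 1) := by
                  refine Finset.sum_le_sum fun s _ => ?_
                  simp only [heF, Finsupp.coe_equivFunOnFinite_symm]
                  exact Nat.le_sub_one_of_lt (i s).isLt
              _ = n * (p ^ j - 1) := by simp [Finset.sum_const, mul_comm]
          · exact le_trans (MvPolynomial.totalDegree_pow _ _) (by rw [hd])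
      _ = n * (p ^ j - 1) + ((p ^ j - 1) * d + D) := by ring
  have hkey : p ^ j * (g (topIdx p n j)).totalDegree ≤ (p ^ j - 1) * d + D := by
    have := hsum ▸ (hdeg.trans hub)
    omega
  have hmax : (p ^ j - 1) * d + D ≤ p ^ j * max D d := by
    calc (p ^ j - 1) * d + D ≤ (p ^ j - 1) * max D d + max D d :=
          add_le_add (Nat.mul_le_mul_left _ (le_max_right _ _)) (le_max_left _ _)
      _ = ((p ^ j - 1) + 1) * max D d := by ring
      _ = p ^ j * max D d := by rw [Nat.sub_add_cancel hq]
  exact Nat.le_of_mul_le_mul_left (le_trans hkey hmax) hq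
end
end
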